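/- Let A ∈ ℝ^{r×r} be Metzler and let γ ∈ ℝ be such that A + γ I_r is entrywise nonnegative. Then μ := ρ(A + γ I_r) − γ is a (real) eigenvalue of A, and every complex eigenvalue λ of A satisfies Re(λ) ≤ μ. -/

import Mathlib

open Matrix

/-- A square real matrix is Metzler if every off-diagonal entry is nonnegative. -/
def IsMetzler {r : ℕ} (A : Matrix (Fin r) (Fin r) ℝ) : Prop :=
  ∀ i j, i ≠ j → 0 ≤ A i j

/-- The spectral radius of a square real matrix: the maximum modulus of its
complex eigenvalues. -/
noncomputable def specRadius {r : ℕ} (M : Matrix (Fin r) (Fin r) ℝ) : ℝ :=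
  sSup ((fun μ : ℂ => ‖μ‖) '' spectrum ℂ (M.map Complex.ofReal))

section Aux

open Filter

attribute [local instance] Matrix.linftyOpNormedRing Matrix.linftyOpNormedAlgebra

namespace MetzlerAux

variable {r : ℕ}

lemma pow_entry_nonneg (M : Matrix (Fin r) (Fin r) ℝ) (hM : ∀ i j, 0 ≤ M i j) (n : ℕ) :
    ∀ i j, 0 ≤ (M ^ n) i j := by
  induction n with
  | zero => intro i j; rw [pow_zero]; by_cases h : i = j <;> simp [Matrix.one_apply, h]
  | succ n ih =>
      intro i j
      rw [pow_succ, Matrix.mul_apply]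
      exact Finset.sum_nonneg fun k _ => mul_nonneg (ih i k) (hM k j)

lemma map_pow_eq (M : Matrix (Fin r) (Fin r) ℝ) (n : ℕ) :
    (M.map Complex.ofReal) ^ n = (M ^ n).map Complex.ofReal := by
  have h : ∀ X : Matrix (Fin r) (Fin r) ℝ, X.map Complex.ofReal
      = Complex.ofRealHom.mapMatrix X := fun _ => rfl
  rw [h, h, ← map_pow]

lemma entry_norm_le (X : Matrix (Fin r) (Fin r) ℂ) (i j : Fin r) : ‖X i j‖ ≤ ‖X‖ := by
  have h : ‖X i j‖₊ ≤ ‖X‖₊ := by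
    rw [Matrix.linfty_opNNNorm_def]
    exact le_trans
      (Finset.single_le_sum (f := fun j' => ‖X i j'‖₊) (fun _ _ => zero_le) (Finset.mem_univ j))
      (Finset.le_sup (f := fun i => ∑ j : Fin r, ‖X i j‖₊) (Finset.mem_univ i))
  exact_mod_cast h

lemma norm_le_norm_of_entry_le (X Y : Matrix (Fin r) (Fin r) ℂ)
    (h : ∀ i j, ‖X i j‖ ≤ ‖Y i j‖) : ‖X‖ ≤ ‖Y‖ := by
  have : ‖X‖₊ ≤ ‖Y‖₊ := by
    rw [Matrix.linfty_opNNNorm_def, Matrix.linfty_opNNNorm_def]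
    refine Finset.sup_le fun i _ => le_trans (Finset.sum_le_sum fun j _ => ?_)
      (Finset.le_sup (f := fun i => ∑ j : Fin r, ‖Y i j‖₊) (Finset.mem_univ i))
    exact_mod_cast h i j
  exact_mod_cast this

lemma summable_norm_resolvent (X : Matrix (Fin r) (Fin r) ℂ) {t : ℝ}
    (ht : spectralRadius ℂ X < ENNReal.ofReal t) (s : ℂ) (hs : ‖s‖ = t) :
    Summable fun n : ℕ => ‖s⁻¹ ^ (n + 1) • X ^ n‖ := by
  have ht0 : 0 < t := by
    by_contra h
    rw [ENNReal.ofReal_eq_zero.mpr (le_of_not_gt h)] at ht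
    exact (not_le.mpr ht) zero_le
  obtain ⟨c, hc1, hc2⟩ := exists_between ht
  have hcne : c ≠ ⊤ := ne_top_of_lt hc2
  set c' : ℝ := c.toReal with hc'
  have hc'0 : 0 ≤ c' := ENNReal.toReal_nonneg
  have hc't : c' < t := by
    have := ENNReal.toReal_lt_toReal hcne (by simp : (ENNReal.ofReal t) ≠ ⊤) |>.mpr hc2
    rwa [ENNReal.toReal_ofReal ht0.le] at this
  have hgel := spectrum.pow_nnnorm_pow_one_div_tendsto_nhds_spectralRadius X
  have hev : ∀ᶠ n : ℕ in atTop, (‖X ^ n‖₊ : ENNReal) ^ (1 / (n : ℝ)) < c :=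
    hgel.eventually_lt_const hc1
  have hev2 : ∀ᶠ n : ℕ in atTop, ‖X ^ n‖ ≤ c' ^ n := by
    filter_upwards [hev, eventually_ge_atTop 1] with n hn hn1
    have hne : (n : ℝ) ≠ 0 := Nat.cast_ne_zero.mpr (by omega)
    have h1' : (‖X ^ n‖₊ : ENNReal) < c ^ n := by
      rw [← ENNReal.rpow_natCast c n]
      calc (‖X ^ n‖₊ : ENNReal) = ((‖X ^ n‖₊ : ENNReal) ^ (1 / (n : ℝ))) ^ (n : ℝ) := by
            rw [← ENNReal.rpow_mul, one_div, inv_mul_cancel₀ hne, ENNReal.rpow_one]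
        _ < c ^ (n : ℝ) := ENNReal.rpow_lt_rpow hn (by positivity)
    have h2 := ENNReal.toReal_mono (ENNReal.pow_ne_top hcne) h1'.le
    simpa [ENNReal.toReal_pow] using h2
  obtain ⟨N, hN⟩ := eventually_atTop.mp hev2
  rw [← summable_nat_add_iff N]
  have hnorm : ∀ n : ℕ, ‖s⁻¹ ^ (n + 1) • X ^ n‖ = t⁻¹ ^ (n + 1) * ‖X ^ n‖ := by
    intro n
    rw [norm_smul, norm_pow, norm_inv, hs]
  have hrat0 : 0 ≤ c' / t := div_nonneg hc'0 ht0.le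
  have hrat1 : c' / t < 1 := (div_lt_one ht0).mpr hc't
  refine Summable.of_nonneg_of_le (fun n => norm_nonneg _) (fun n => ?_)
    ((summable_geometric_of_lt_one hrat0 hrat1).mul_left (t⁻¹ * (c' / t) ^ N))
  show ‖s⁻¹ ^ (n + N + 1) • X ^ (n + N)‖ ≤ t⁻¹ * (c' / t) ^ N * (c' / t) ^ n
  rw [hnorm]
  have hb := hN (n + N) (by omega)
  have h3 : t⁻¹ ^ (n + N + 1) * ‖X ^ (n + N)‖ ≤ t⁻¹ ^ (n + N + 1) * c' ^ (n + N) :=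
    mul_le_mul_of_nonneg_left hb (by positivity)
  refine h3.trans (le_of_eq ?_)
  rw [div_pow, div_pow]
  ring

lemma resolvent_unit (X : Matrix (Fin r) (Fin r) ℂ) {t : ℝ}
    (ht : spectralRadius ℂ X < ENNReal.ofReal t) (s : ℂ) (hs : ‖s‖ = t) :
    ∃ u : (Matrix (Fin r) (Fin r) ℂ)ˣ, (u : Matrix (Fin r) (Fin r) ℂ) = algebraMap ℂ _ s - X ∧
      ((u⁻¹ : (Matrix (Fin r) (Fin r) ℂ)ˣ) : Matrix (Fin r) (Fin r) ℂ)
        = ∑' n : ℕ, s⁻¹ ^ (n + 1) • X ^ n := by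
  have ht0 : 0 < t := by
    by_contra h
    rw [ENNReal.ofReal_eq_zero.mpr (le_of_not_gt h)] at ht
    exact (not_le.mpr ht) zero_le
  have hs0 : s ≠ 0 := by
    intro h; rw [h] at hs; simp at hs; exact ht0.ne hs
  set a : Matrix (Fin r) (Fin r) ℂ := algebraMap ℂ _ s - X with ha
  set f : ℕ → Matrix (Fin r) (Fin r) ℂ := fun n => s⁻¹ ^ (n + 1) • X ^ n with hf
  have hnsum := summable_norm_resolvent X ht s hs
  have hsum : Summable f := Summable.of_norm hnsum
  set T := ∑' n, f n with hT
  have htend : Tendsto (fun N => ∑ n ∈ Finset.range N, f n) atTop (nhds T) :=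
    hsum.hasSum.tendsto_sum_nat
  -- partial sums identity
  have hpartial : ∀ N, a * (∑ n ∈ Finset.range N, f n) = 1 - s⁻¹ ^ N • X ^ N := by
    intro N
    induction N with
    | zero => simp
    | succ N ih =>
        rw [Finset.sum_range_succ, mul_add, ih]
        have hstep : a * f N = s⁻¹ ^ N • X ^ N - s⁻¹ ^ (N + 1) • X ^ (N + 1) := by
          rw [ha, hf, sub_mul]
          have h1 : algebraMap ℂ (Matrix (Fin r) (Fin r) ℂ) s * (s⁻¹ ^ (N + 1) • X ^ N)
              = s⁻¹ ^ N • X ^ N := by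
            rw [← Algebra.smul_def, smul_smul, pow_succ, ← mul_assoc, mul_comm s,
              mul_assoc, mul_inv_cancel₀ hs0, mul_one]
          have h2 : X * (s⁻¹ ^ (N + 1) • X ^ N) = s⁻¹ ^ (N + 1) • X ^ (N + 1) := by
            rw [mul_smul_comm, ← pow_succ']
          rw [h1, h2]
        rw [hstep]; abel
  have hzero : Tendsto (fun N : ℕ => s⁻¹ ^ N • X ^ N) atTop (nhds 0) := by
    refine tendsto_zero_iff_norm_tendsto_zero.mpr ?_
    have h1 : Tendsto (fun N => ‖f N‖) atTop (nhds 0) := hnsum.tendsto_atTop_zero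
    have h2 : Tendsto (fun N => ‖s‖ * ‖f N‖) atTop (nhds 0) := by
      simpa using h1.const_mul ‖s‖
    refine h2.congr fun N => ?_
    rw [hf, norm_smul, norm_smul, ← mul_assoc]
    congr 1
    simp only [norm_pow, norm_inv]
    have habs : ‖s‖ ≠ 0 := by simpa using hs0
    field_simp
    rw [pow_succ', ← mul_assoc, one_div, mul_inv_cancel₀ habs, one_mul]
  have h1 : a * T = 1 := by
    have l1 : Tendsto (fun N => a * ∑ n ∈ Finset.range N, f n) atTop (nhds (a * T)) :=
      htend.const_mul a
    have l2 : Tendsto (fun N => a * ∑ n ∈ Finset.range N, f n) atTop (nhds 1) := by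
      simp only [hpartial]
      simpa using (tendsto_const_nhds (x := (1 : Matrix (Fin r) (Fin r) ℂ))).sub hzero
    exact tendsto_nhds_unique l1 l2
  have hcomm : ∀ n, f n * a = a * f n := by
    intro n
    rw [hf, ha, smul_mul_assoc, mul_smul_comm]
    congr 1
    rw [mul_sub, sub_mul]
    congr 1
    · rw [← Algebra.commutes]
    · exact ((Commute.refl X).pow_left n).eq
  have h2 : T * a = 1 := by
    have l1 : Tendsto (fun N => (∑ n ∈ Finset.range N, f n) * a) atTop (nhds (T * a)) :=
      htend.mul_const a
    have l2 : Tendsto (fun N => (∑ n ∈ Finset.range N, f n) * a) atTop (nhds 1) := by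
      have heq : ∀ N, (∑ n ∈ Finset.range N, f n) * a = a * ∑ n ∈ Finset.range N, f n := by
        intro N
        rw [Finset.sum_mul, Finset.mul_sum]
        exact Finset.sum_congr rfl fun n _ => hcomm n
      simp only [heq, hpartial]
      simpa using (tendsto_const_nhds (x := (1 : Matrix (Fin r) (Fin r) ℂ))).sub hzero
    exact tendsto_nhds_unique l1 l2
  exact ⟨⟨a, T, h1, h2⟩, rfl, rfl⟩

/-- The continuous linear functional extracting entry `(i,j)`. -/
noncomputable def entryCLM (i j : Fin r) : Matrix (Fin r) (Fin r) ℂ →L[ℂ] ℂ :=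
  LinearMap.toContinuousLinearMap
    { toFun := fun X => X i j
      map_add' := fun _ _ => rfl
      map_smul' := fun _ _ => rfl }

lemma tsum_entry_norm_le (M : Matrix (Fin r) (Fin r) ℝ) (hM : ∀ i j, 0 ≤ M i j) {t : ℝ}
    (ht : spectralRadius ℂ (M.map Complex.ofReal) < ENNReal.ofReal t) (s : ℂ)
    (hs : ‖s‖ = t) :
    ‖∑' n : ℕ, s⁻¹ ^ (n + 1) • (M.map Complex.ofReal) ^ n‖
      ≤ ‖∑' n : ℕ, ((t : ℂ))⁻¹ ^ (n + 1) • (M.map Complex.ofReal) ^ n‖ := by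
  have ht0 : 0 < t := by
    by_contra h
    rw [ENNReal.ofReal_eq_zero.mpr (le_of_not_gt h)] at ht
    exact (not_le.mpr ht) zero_le
  set X := M.map Complex.ofReal with hX
  set f : ℕ → Matrix (Fin r) (Fin r) ℂ := fun n => s⁻¹ ^ (n + 1) • X ^ n with hf
  set g : ℕ → Matrix (Fin r) (Fin r) ℂ := fun n => ((t : ℂ))⁻¹ ^ (n + 1) • X ^ n with hg
  have htabs : ‖((t : ℂ))‖ = t := by
    rw [Complex.norm_real, Real.norm_eq_abs, abs_of_pos ht0]
  have hfsum : Summable f := Summable.of_norm (summable_norm_resolvent X ht s hs)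
  have hgsum : Summable g := Summable.of_norm (summable_norm_resolvent X ht _ htabs)
  apply norm_le_norm_of_entry_le
  intro i j
  -- realize the entries as tsums
  have hfe : (∑' n, f n) i j = ∑' n, (f n) i j := by
    exact (entryCLM i j).map_tsum hfsum
  have hge : (∑' n, g n) i j = ∑' n, (g n) i j := by
    exact (entryCLM i j).map_tsum hgsum
  -- real entry series
  set w : ℕ → ℝ := fun n => t⁻¹ ^ (n + 1) * (M ^ n) i j with hw
  have hwnonneg : ∀ n, 0 ≤ w n := fun n =>
    mul_nonneg (by positivity) (pow_entry_nonneg M hM n i j)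
  have hfnorm : ∀ n, ‖(f n) i j‖ = w n := by
    intro n
    rw [hf]
    simp only [Matrix.smul_apply, smul_eq_mul, norm_mul, norm_pow, norm_inv,
      hs]
    congr 1
    rw [hX, map_pow_eq, Matrix.map_apply, Complex.norm_real, Real.norm_eq_abs,
      abs_of_nonneg (pow_entry_nonneg M hM n i j)]
  have hge2 : ∀ n, (g n) i j = ((w n : ℝ) : ℂ) := by
    intro n
    rw [hg]
    simp only [Matrix.smul_apply, smul_eq_mul]
    rw [hX, map_pow_eq, Matrix.map_apply, hw]
    push_cast
    ring
  have hwsum : Summable w := by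
    refine Summable.of_nonneg_of_le hwnonneg (fun n => ?_) (summable_norm_resolvent X ht s hs)
    rw [← hfnorm n]
    exact entry_norm_le (f n) i j
  have hgsum' : ∑' n, (g n) i j = ((∑' n, w n : ℝ) : ℂ) := by
    rw [tsum_congr hge2]
    exact (Complex.ofRealCLM.map_tsum hwsum).symm
  rw [hfe, hge, hgsum']
  have h1 : ‖∑' n, (f n) i j‖ ≤ ∑' n, w n := by
    have h2 := norm_tsum_le_tsum_norm (f := fun n => (f n) i j)
      ((summable_congr hfnorm).mpr hwsum)
    rwa [tsum_congr hfnorm] at h2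
  refine h1.trans (le_of_eq ?_)
  rw [Complex.norm_real, Real.norm_eq_abs, abs_of_nonneg (tsum_nonneg hwnonneg)]

/-- Perron: the spectral radius of an entrywise nonnegative matrix is an eigenvalue. -/
lemma perron (hr : 0 < r) (M : Matrix (Fin r) (Fin r) ℝ) (hM : ∀ i j, 0 ≤ M i j) :
    ((sSup ((norm : ℂ → ℝ) '' spectrum ℂ (M.map Complex.ofReal)) : ℝ) : ℂ)
      ∈ spectrum ℂ (M.map Complex.ofReal) := by
  haveI : Nonempty (Fin r) := ⟨⟨0, hr⟩⟩
  set X := M.map Complex.ofReal with hX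
  set S := spectrum ℂ X with hS
  have hfin : S.Finite := Matrix.finite_spectrum X
  have hne : S.Nonempty := spectrum.nonempty_of_isAlgClosed_of_finiteDimensional ℂ X
  have himfin : ((norm : ℂ → ℝ) '' S).Finite := hfin.image _
  have himne : ((norm : ℂ → ℝ) '' S).Nonempty := hne.image _
  set ρ := sSup ((norm : ℂ → ℝ) '' S) with hρdef
  have hmem : ρ ∈ (norm : ℂ → ℝ) '' S := Set.Nonempty.csSup_mem himne himfin
  obtain ⟨lam, hlamS, hlam⟩ := hmem
  have hub : ∀ z ∈ S, ‖z‖ ≤ ρ := fun z hz =>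
    le_csSup himfin.bddAbove ⟨z, hz, rfl⟩
  have hρ0 : 0 ≤ ρ := hlam ▸ norm_nonneg lam
  rcases eq_or_lt_of_le hρ0 with hρzero | hρpos
  · -- ρ = 0 : then lam = 0 lies in the spectrum
    have : lam = 0 := by
      have : ‖lam‖ = 0 := by rw [hlam, ← hρzero]
      exact norm_eq_zero.mp this
    rw [← hρzero]
    simpa [this] using hlamS
  -- main case 0 < ρ
  have hrad : spectralRadius ℂ X = ENNReal.ofReal ρ := by
    apply le_antisymm
    · rw [spectralRadius]
      refine iSup₂_le fun z hz => ?_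
      rw [← enorm_eq_nnnorm, ← ofReal_norm]
      exact ENNReal.ofReal_le_ofReal (hub z hz)
    · have h : ENNReal.ofReal ρ = (‖lam‖₊ : ENNReal) := by
        rw [← enorm_eq_nnnorm, ← ofReal_norm, hlam]
      rw [h, spectralRadius]
      exact le_iSup₂ (f := fun z (_ : z ∈ spectrum ℂ X) => (‖z‖₊ : ENNReal)) lam hlamS
  by_contra hρS
  -- ρ is in the resolvent set
  have hx₀ : IsUnit (algebraMap ℂ (Matrix (Fin r) (Fin r) ℂ) ((ρ : ℝ) : ℂ) - X) :=
    spectrum.notMem_iff.mp hρS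
  set x₀ : Matrix (Fin r) (Fin r) ℂ := algebraMap ℂ _ ((ρ : ℝ) : ℂ) - X with hx₀def
  have hcont : ContinuousAt Ring.inverse x₀ := by
    have := NormedRing.inverse_continuousAt hx₀.unit
    rwa [hx₀.unit_spec] at this
  obtain ⟨δ, hδ0, hball⟩ := Metric.continuousAt_iff.mp hcont 1 one_pos
  set C : ℝ := ‖Ring.inverse x₀‖ + 1 with hC
  have hC0 : 0 < C := by positivity
  set ε : ℝ := min (δ / 2) (1 / (2 * C)) with hε
  have hε0 : 0 < ε := lt_min (by positivity) (by positivity)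
  have hεδ : ε < δ := lt_of_le_of_lt (min_le_left _ _) (by linarith)
  have hεC : ε * C < 1 := by
    have h1 : ε ≤ 1 / (2 * C) := min_le_right _ _
    calc ε * C ≤ (1 / (2 * C)) * C := mul_le_mul_of_nonneg_right h1 hC0.le
      _ = 1 / 2 := by field_simp
      _ < 1 := by norm_num
  set t : ℝ := ρ + ε with htdef
  have hρt : ρ < t := by linarith
  have ht0 : 0 < t := lt_trans hρpos hρt
  have htrad : spectralRadius ℂ X < ENNReal.ofReal t := by
    rw [hrad]
    exact (ENNReal.ofReal_lt_ofReal_iff ht0).mpr hρt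
  have htabs : ‖((t : ℝ) : ℂ)‖ = t := by
    rw [Complex.norm_real, Real.norm_eq_abs, abs_of_pos ht0]
  -- the point s on the circle of radius t closest to lam
  set s : ℂ := (((t / ρ : ℝ)) : ℂ) * lam with hsdef
  have hsabs : ‖s‖ = t := by
    rw [hsdef, norm_mul, Complex.norm_real, Real.norm_eq_abs, abs_of_pos (by positivity), hlam]
    field_simp
  have hslam : ‖s - lam‖ = ε := by
    have h1 : s - lam = (((ε / ρ : ℝ)) : ℂ) * lam := by
      rw [hsdef, htdef]
      push_cast
      have : (ρ : ℂ) ≠ 0 := by exact_mod_cast hρpos.ne'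
      field_simp
      ring
    rw [h1, norm_mul, Complex.norm_real, Real.norm_eq_abs, abs_of_pos (by positivity), hlam]
    field_simp
  obtain ⟨ut, hut, hutinv⟩ := resolvent_unit X htrad ((t : ℝ) : ℂ) htabs
  obtain ⟨us, hus, husinv⟩ := resolvent_unit X htrad s hsabs
  -- bound on the resolvent at t
  have hdist : dist (algebraMap ℂ (Matrix (Fin r) (Fin r) ℂ) ((t : ℝ) : ℂ) - X) x₀ < δ := by
    rw [dist_eq_norm, hx₀def]
    have h1 : algebraMap ℂ (Matrix (Fin r) (Fin r) ℂ) ((t : ℝ) : ℂ) - X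
        - (algebraMap ℂ _ ((ρ : ℝ) : ℂ) - X)
        = algebraMap ℂ _ ((((t - ρ) : ℝ)) : ℂ) := by
      rw [Complex.ofReal_sub, map_sub]
      abel
    rw [h1, Algebra.algebraMap_eq_smul_one, norm_smul, norm_one, mul_one,
      Complex.norm_real, Real.norm_eq_abs]
    rw [show t - ρ = ε by rw [htdef]; ring, abs_of_pos hε0]
    exact hεδ
  have hTt : ‖((ut⁻¹ : (Matrix (Fin r) (Fin r) ℂ)ˣ) : Matrix (Fin r) (Fin r) ℂ)‖ ≤ C := by
    have h2 := hball hdist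
    rw [dist_eq_norm] at h2
    have h3 : Ring.inverse (algebraMap ℂ (Matrix (Fin r) (Fin r) ℂ) ((t : ℝ) : ℂ) - X)
        = ((ut⁻¹ : (Matrix (Fin r) (Fin r) ℂ)ˣ) : Matrix (Fin r) (Fin r) ℂ) := by
      rw [← hut, Ring.inverse_unit]
    rw [h3] at h2
    calc ‖((ut⁻¹ : (Matrix (Fin r) (Fin r) ℂ)ˣ) : Matrix (Fin r) (Fin r) ℂ)‖
        = ‖(((ut⁻¹ : (Matrix (Fin r) (Fin r) ℂ)ˣ) : Matrix (Fin r) (Fin r) ℂ)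
            - Ring.inverse x₀) + Ring.inverse x₀‖ := by congr 1; abel
      _ ≤ ‖((ut⁻¹ : (Matrix (Fin r) (Fin r) ℂ)ˣ) : Matrix (Fin r) (Fin r) ℂ)
            - Ring.inverse x₀‖ + ‖Ring.inverse x₀‖ := norm_add_le _ _
      _ ≤ 1 + ‖Ring.inverse x₀‖ := by linarith
      _ = C := by rw [hC]; ring
  have hTs : ‖((us⁻¹ : (Matrix (Fin r) (Fin r) ℂ)ˣ) : Matrix (Fin r) (Fin r) ℂ)‖ ≤ C := by
    rw [husinv]
    refine (tsum_entry_norm_le M hM htrad s hsabs).trans ?_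
    rw [← hutinv]
    exact hTt
  set z : Matrix (Fin r) (Fin r) ℂ
    := (s - lam) • ((us⁻¹ : (Matrix (Fin r) (Fin r) ℂ)ˣ) : Matrix (Fin r) (Fin r) ℂ) with hz
  have hznorm : ‖z‖ < 1 := by
    rw [hz, norm_smul, hslam]
    calc ε * ‖((us⁻¹ : (Matrix (Fin r) (Fin r) ℂ)ˣ) : Matrix (Fin r) (Fin r) ℂ)‖
        ≤ ε * C := mul_le_mul_of_nonneg_left hTs hε0.le
      _ < 1 := hεC
  have hone : IsUnit (1 - z) := (Units.oneSub z hznorm).isUnit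
  have hkey : algebraMap ℂ (Matrix (Fin r) (Fin r) ℂ) lam - X
      = (us : Matrix (Fin r) (Fin r) ℂ) * (1 - z) := by
    rw [mul_sub, mul_one, hz, mul_smul_comm, Units.mul_inv, hus,
      ← Algebra.algebraMap_eq_smul_one, map_sub]
    abel
  exact spectrum.mem_iff.mp hlamS (hkey ▸ us.isUnit.mul hone)

end MetzlerAux

end Aux

lemma spectrum_shift {r : ℕ} (B : Matrix (Fin r) (Fin r) ℂ) (c z : ℂ) :
    z ∈ spectrum ℂ B ↔ z + c ∈ spectrum ℂ (B + algebraMap ℂ (Matrix (Fin r) (Fin r) ℂ) c) := by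
  have hEq : algebraMap ℂ (Matrix (Fin r) (Fin r) ℂ) (z + c)
      - (B + algebraMap ℂ (Matrix (Fin r) (Fin r) ℂ) c)
      = algebraMap ℂ (Matrix (Fin r) (Fin r) ℂ) z - B := by
    rw [map_add]; abel
  rw [spectrum.mem_iff, spectrum.mem_iff, hEq]

/-- if `A` is Metzler and `A + γ I` is entrywise nonnegative, then
`μ := ρ(A + γ I) − γ` is a real eigenvalue of `A` and every complex eigenvalue
`λ` of `A` satisfies `Re λ ≤ μ`. -/
theorem metzler_dominant_eigenvalue {r : ℕ} (hr : 0 < r)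
    (A : Matrix (Fin r) (Fin r) ℝ) (γ : ℝ)
    (hmet : IsMetzler A)
    (hnonneg : ∀ i j, 0 ≤ (A + γ • (1 : Matrix (Fin r) (Fin r) ℝ)) i j) :
    ((specRadius (A + γ • (1 : Matrix (Fin r) (Fin r) ℝ)) - γ : ℝ) : ℂ) ∈
        spectrum ℂ (A.map Complex.ofReal) ∧
      ∀ lam ∈ spectrum ℂ (A.map Complex.ofReal),
        lam.re ≤ specRadius (A + γ • (1 : Matrix (Fin r) (Fin r) ℝ)) - γ := by
  set N := A + γ • (1 : Matrix (Fin r) (Fin r) ℝ) with hN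
  have hNmap : N.map Complex.ofReal
      = A.map Complex.ofReal + algebraMap ℂ (Matrix (Fin r) (Fin r) ℂ) ((γ : ℝ) : ℂ) := by
    ext i j
    simp only [hN, Matrix.map_apply, Matrix.add_apply, Matrix.smul_apply, Matrix.one_apply,
      Algebra.algebraMap_eq_smul_one, smul_eq_mul]
    split_ifs <;> push_cast <;> ring
  have hperron := MetzlerAux.perron hr N hnonneg
  have hshift : ∀ z : ℂ, z ∈ spectrum ℂ (A.map Complex.ofReal)
      ↔ z + γ ∈ spectrum ℂ (N.map Complex.ofReal) := by
    intro z
    rw [hNmap]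
    exact spectrum_shift _ _ _
  constructor
  · rw [hshift]
    have h : ((specRadius N - γ : ℝ) : ℂ) + γ = ((specRadius N : ℝ) : ℂ) := by
      push_cast; ring
    rw [h]
    exact hperron
  · intro lam hlam
    have h1 : lam + γ ∈ spectrum ℂ (N.map Complex.ofReal) := (hshift lam).mp hlam
    have hfin : (spectrum ℂ (N.map Complex.ofReal)).Finite := Matrix.finite_spectrum _
    have h2 : ‖lam + γ‖ ≤ specRadius N :=
      le_csSup (hfin.image _).bddAbove ⟨_, h1, rfl⟩
    have h3 : (lam + γ).re ≤ ‖lam + γ‖ := Complex.re_le_norm _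
    have h4 : lam.re + γ ≤ specRadius N := by
      simpa using h3.trans h2
    linarith
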